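/- Let G be a k-connected graph, P a longest path in G with endpoints p1 and p2, x a vertex not on P, and Q1, ..., Qk internally vertex-disjoint paths from x to P meeting P only at their endpoints v1, ..., vk, ordered so that v1, ..., vk appear in this order along P from p1. Then the distance along P from p1 to v1 is at least |Q1| + |Qk| - 1. -/

import Mathlib

set_option linter.unusedSectionVars false
set_option maxHeartbeats 1000000

open SimpleGraph

variable {V : Type*} [Fintype V] [DecidableEq V]

namespace SimpleGraph.Walk
variable {G : SimpleGraph V}

theorem length_takeUntil_eq_indexOf' {u v w : V} (p : G.Walk v w) (h : u ∈ p.support) :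
    (p.takeUntil u h).length = p.support.idxOf u := by
  induction p with
  | nil =>
    rw [mem_support_nil_iff] at h
    subst u
    simp!
  | cons r p ih =>
    cases h with
    | head =>
      simp! [List.idxOf_cons_self]
    | tail _ h' =>
      simp! only [support_cons]
      split_ifs with hx
      · subst hx
        simp [List.idxOf_cons_self]
      · rw [List.idxOf_cons_ne _ (by exact hx), Walk.length_cons, ih h']

theorem isPath_append'' {u v w : V} {p : G.Walk u v} {q : G.Walk v w} (hp : p.IsPath)
    (hq : q.IsPath) (h : ∀ y ∈ p.support, y ∈ q.support → y = v) : (p.append q).IsPath := by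
  rw [isPath_def, support_append]
  refine List.Nodup.append hp.support_nodup hq.support_nodup.tail ?_
  intro y hyp hyt
  have hyq : y ∈ q.support := List.mem_of_mem_tail hyt
  have : y = v := h y hyp hyq
  subst this
  have := hq.support_nodup
  rw [q.support_eq_cons, List.nodup_cons] at this
  exact this.1 hyt

theorem meet_of_append_isPath' {u v w : V} {p : G.Walk u v} {q : G.Walk v w}
    (h : (p.append q).IsPath) : ∀ y ∈ p.support, y ∈ q.support → y = v := by
  rw [isPath_def, support_append, List.nodup_append] at h
  intro y hyp hyq
  by_contra hne
  refine h.2.2 y hyp y ?_ rfl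
  rw [q.support_eq_cons] at hyq
  rcases List.mem_cons.mp hyq with rfl | h'
  · exact absurd rfl hne
  · exact h'

end SimpleGraph.Walk

/-- Distance from a vertex `u` to the vertex set of a walk `P`. -/
noncomputable def walkDist (G : SimpleGraph V) {a b : V} (P : G.Walk a b) (u : V) : ℕ :=
  P.support.toFinset.inf' ⟨a, List.mem_toFinset.mpr P.start_mem_support⟩ (fun x => G.dist u x)

/-- Eccentricity of a walk: max distance from any vertex of `G` to the walk. -/
noncomputable def eccW (G : SimpleGraph V) {a b : V} (P : G.Walk a b) : ℕ :=
  Finset.univ.sup (walkDist G P)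

/-- Path eccentricity of a graph. -/
noncomputable def pe (G : SimpleGraph V) : ℕ :=
  sInf {m | ∃ (a b : V) (P : G.Walk a b), P.IsPath ∧ eccW G P = m}

/-- `P` is a longest path in `G`. -/
def IsLongestPath (G : SimpleGraph V) {a b : V} (P : G.Walk a b) : Prop :=
  P.IsPath ∧ ∀ (c d : V) (Q : G.Walk c d), Q.IsPath → Q.length ≤ P.length

/-- `G` is `k`-connected. -/
def KConnected (k : ℕ) (G : SimpleGraph V) : Prop :=
  k + 1 ≤ Fintype.card V ∧
    ∀ S : Finset V, S.card < k → (G.induce ((↑S : Set V)ᶜ)).Connected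

theorem stmt7 (G : SimpleGraph V) (k : ℕ) (hk : 2 ≤ k) (hG : KConnected k G)
    {p1 p2 : V} (P : G.Walk p1 p2) (hP : IsLongestPath G P)
    (x : V) (hx : x ∉ P.support)
    (v : Fin k → V) (Q : ∀ i : Fin k, G.Walk x (v i))
    (hQpath : ∀ i, (Q i).IsPath)
    (hend : ∀ i, v i ∈ P.support)
    (hdisj : ∀ i j, i ≠ j → ∀ u : V, u ∈ (Q i).support → u ∈ (Q j).support → u = x)
    (hmeet : ∀ i, ∀ u ∈ (Q i).support, u ∈ P.support → u = v i)
    (horder : ∀ i j : Fin k, i < j →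
      P.support.idxOf (v i) < P.support.idxOf (v j)) :
    ((Q ⟨0, by omega⟩).length : ℤ) + (Q ⟨k - 1, by omega⟩).length - 1 ≤
      P.support.idxOf (v ⟨0, by omega⟩) := by
  classical
  let i0 : Fin k := ⟨0, by omega⟩
  let ik : Fin k := ⟨k - 1, by omega⟩
  show ((Q i0).length : ℤ) + (Q ik).length - 1 ≤ P.support.idxOf (v i0)
  have hlt : i0 < ik := by
    show (0 : ℕ) < k - 1
    omega
  have hne : i0 ≠ ik := ne_of_lt hlt
  have hdm : P.support.idxOf (v i0) < P.support.idxOf (v ik) := horder _ _ hlt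
  have hvkP := hend ik
  set T := P.takeUntil (v ik) hvkP with hTdef
  set D := P.dropUntil (v ik) hvkP with hDdef
  have hspec : T.append D = P := P.take_spec hvkP
  have hTlen : T.length = P.support.idxOf (v ik) :=
    Walk.length_takeUntil_eq_indexOf' P hvkP
  have hTD : T.length + D.length = P.length := by
    have := congrArg Walk.length hspec
    rwa [Walk.length_append] at this
  have hPpath := hP.1
  have hTpath : T.IsPath := hPpath.takeUntil hvkP
  have hDpath : D.IsPath := hPpath.dropUntil hvkP
  have hTDpath : (T.append D).IsPath := by rw [hspec]; exact hPpath
  have hmeetTD : ∀ y ∈ T.support, y ∈ D.support → y = v ik :=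
    Walk.meet_of_append_isPath' hTDpath
  have hsupp : P.support = T.support ++ D.support.tail := by
    have := Walk.support_append T D
    rw [hspec] at this
    exact this
  have hv1T : v i0 ∈ T.support := by
    by_contra hmem
    have h1 : P.support.idxOf (v i0) = T.support.length + (D.support.tail).idxOf (v i0) := by
      rw [hsupp, List.idxOf_append_of_notMem hmem]
    have h2 : T.support.length = T.length + 1 := T.length_support
    omega
  have hTv1 : T.support.idxOf (v i0) = P.support.idxOf (v i0) := by
    rw [hsupp, List.idxOf_append_of_mem hv1T]
  set T1 := T.takeUntil (v i0) hv1T with hT1def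
  set M := T.dropUntil (v i0) hv1T with hMdef
  have hspec2 : T1.append M = T := T.take_spec hv1T
  have hT1len : T1.length = P.support.idxOf (v i0) := by
    rw [Walk.length_takeUntil_eq_indexOf' T hv1T, hTv1]
  have hT1M : T1.length + M.length = T.length := by
    have := congrArg Walk.length hspec2
    rwa [Walk.length_append] at this
  have hMpath : M.IsPath := hTpath.dropUntil hv1T
  have hMsubT : M.support ⊆ T.support := T.support_dropUntil_subset hv1T
  have hTsubP : T.support ⊆ P.support := P.support_takeUntil_subset hvkP
  have hDsubP : D.support ⊆ P.support := P.support_dropUntil_subset hvkP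
  have hMpos : 0 < M.length := by omega
  set R := M.reverse with hRdef
  have hRpath : R.IsPath := hMpath.reverse
  have hRlen : R.length = M.length := M.length_reverse
  have hRnil : ¬ R.Nil := by
    rw [Walk.not_nil_iff_lt_length]
    omega
  set N := R.tail with hNdef
  have hNlen : N.length + 1 = R.length := Walk.length_tail_add_one hRnil
  have hNpath : N.IsPath := hRpath.tail
  have hNsupp : v ik :: N.support = R.support := Walk.cons_support_tail hRnil
  have hvknN : v ik ∉ N.support := by
    intro hmem
    have := hRpath.support_nodup
    rw [← hNsupp, List.nodup_cons] at this
    exact this.1 hmem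
  have hNsubM : N.support ⊆ M.support := by
    intro y hy
    have : y ∈ R.support := by rw [← hNsupp]; exact List.mem_cons_of_mem _ hy
    rw [Walk.support_reverse] at this
    exact List.mem_reverse.mp this
  -- v i0 not in D.support
  have hv1nD : v i0 ∉ D.support := by
    intro hmem
    have := hmeetTD _ hv1T hmem
    have hne2 : v i0 ≠ v ik := by
      intro h
      rw [h] at hdm
      omega
    exact hne2 this
  -- Build the long path
  set A := (Q ik).append D with hAdef
  have hApath : A.IsPath := by
    refine Walk.isPath_append'' (hQpath ik) hDpath ?_
    intro y hyQ hyD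
    exact hmeet ik y hyQ (hDsubP hyD)
  set B := ((Q i0).reverse).append A with hBdef
  have hBpath : B.IsPath := by
    refine Walk.isPath_append'' (hQpath i0).reverse hApath ?_
    intro y hyQ hyA
    rw [Walk.support_reverse, List.mem_reverse] at hyQ
    rw [hAdef, Walk.mem_support_append_iff] at hyA
    rcases hyA with hyA | hyA
    · exact hdisj i0 ik hne y hyQ hyA
    · exact absurd ((hmeet i0 y hyQ (hDsubP hyA)) ▸ hyA) hv1nD
  set W := N.append B with hWdef
  have hWpath : W.IsPath := by
    refine Walk.isPath_append'' hNpath hBpath ?_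
    intro y hyN hyB
    have hyM : y ∈ M.support := hNsubM hyN
    have hyP : y ∈ P.support := hTsubP (hMsubT hyM)
    rw [hBdef, Walk.mem_support_append_iff] at hyB
    rcases hyB with hyB | hyB
    · rw [Walk.support_reverse, List.mem_reverse] at hyB
      exact hmeet i0 y hyB hyP
    · rw [hAdef, Walk.mem_support_append_iff] at hyB
      rcases hyB with hyB | hyB
      · exact absurd ((hmeet ik y hyB hyP) ▸ hyN) hvknN
      · exact absurd ((hmeetTD y (hMsubT hyM) hyB) ▸ hyN) hvknN
  have hWlen : W.length = N.length + ((Q i0).length + ((Q ik).length + D.length)) := by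
    simp [hWdef, hBdef, hAdef, Walk.length_append, Walk.length_reverse]
  have hle : W.length ≤ P.length := hP.2 _ _ W hWpath
  -- arithmetic
  have hq1 : (Q i0).length = (Q ⟨0, by omega⟩ : G.Walk x _).length := rfl
  omega
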